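/- Let K₀ > 0 and set F₀ = K₀. Define λ(t) := 1 - K₀·t and f(t) := √(1 - K₀·t) for t ∈ [0, 1/K₀). Then λ and f are positive and differentiable on [0, 1/K₀), λ(0) = f(0) = 1, and for all t ∈ [0, 1/K₀) they satisfy the unnormalized S¹-triple Ricci flow system: λ'(t) = -2·K₀ + F₀·f(t)²·λ(t)⁻¹ and f'(t) = -(1/2)·F₀·f(t)³·λ(t)⁻². Moreover λ(t) → 0 as t → (1/K₀)⁻. -/

import Mathlib

/-- For `K₀ > 0` and `F₀ = K₀`, the pair `λ(t) = 1 - K₀t`,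
`f(t) = √(1 - K₀t)` solves the unnormalized S¹-triple Ricci flow system on `[0, 1/K₀)`,
and `λ(t) → 0` as `t → (1/K₀)⁻`. -/
theorem stmt_2 (K₀ F₀ : ℝ) (hK₀ : 0 < K₀) (hF₀ : F₀ = K₀)
    (lam f : ℝ → ℝ) (hlam : lam = fun t => 1 - K₀ * t)
    (hf : f = fun t => Real.sqrt (1 - K₀ * t)) :
    (∀ t ∈ Set.Ico (0:ℝ) (1 / K₀), 0 < lam t ∧ 0 < f t) ∧
    (∀ t ∈ Set.Ico (0:ℝ) (1 / K₀),
      DifferentiableWithinAt ℝ lam (Set.Ico 0 (1 / K₀)) t ∧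
      DifferentiableWithinAt ℝ f (Set.Ico 0 (1 / K₀)) t) ∧
    lam 0 = 1 ∧ f 0 = 1 ∧
    (∀ t ∈ Set.Ico (0:ℝ) (1 / K₀),
      HasDerivWithinAt lam (-2 * K₀ + F₀ * (f t)^2 * (lam t)⁻¹) (Set.Ico 0 (1 / K₀)) t ∧
      HasDerivWithinAt f (-(1/2) * F₀ * (f t)^3 * ((lam t)^2)⁻¹) (Set.Ico 0 (1 / K₀)) t) ∧
    Filter.Tendsto lam (nhdsWithin (1 / K₀) (Set.Iio (1 / K₀))) (nhds 0) := by
  subst hF₀ hlam hf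
  have hpos : ∀ t ∈ Set.Ico (0:ℝ) (1 / F₀), 0 < 1 - F₀ * t := by
    intro t ht
    have h1 : F₀ * t < F₀ * (1 / F₀) := by
      exact mul_lt_mul_of_pos_left ht.2 hK₀
    rw [mul_one_div_cancel hK₀.ne'] at h1
    linarith
  have hderivL : ∀ t : ℝ, HasDerivAt (fun t => 1 - F₀ * t) (-F₀) t := by
    intro t
    simpa using ((hasDerivAt_id t).const_mul F₀).const_sub 1
  have hderivF : ∀ t ∈ Set.Ico (0:ℝ) (1 / F₀),
      HasDerivAt (fun t => Real.sqrt (1 - F₀ * t))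
        (-F₀ / (2 * Real.sqrt (1 - F₀ * t))) t := by
    intro t ht
    exact (hderivL t).sqrt (hpos t ht).ne'
  refine ⟨?_, ?_, ?_, ?_, ?_, ?_⟩
  · intro t ht
    exact ⟨hpos t ht, Real.sqrt_pos.mpr (hpos t ht)⟩
  · intro t ht
    exact ⟨((hderivL t).differentiableAt).differentiableWithinAt,
      ((hderivF t ht).differentiableAt).differentiableWithinAt⟩
  · simp
  · simp
  · intro t ht
    have hL := hpos t ht
    have hs : Real.sqrt (1 - F₀ * t) ^ 2 = 1 - F₀ * t := Real.sq_sqrt hL.le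
    have hsne : Real.sqrt (1 - F₀ * t) ≠ 0 := (Real.sqrt_pos.mpr hL).ne'
    constructor
    · have : (-2 * F₀ + F₀ * (Real.sqrt (1 - F₀ * t))^2 * (1 - F₀ * t)⁻¹) = -F₀ := by
        rw [hs]
        field_simp
        ring
      rw [this]
      exact (hderivL t).hasDerivWithinAt
    · have heq : (-(1/2) * F₀ * (Real.sqrt (1 - F₀ * t))^3 * (((1 - F₀ * t))^2)⁻¹)
          = -F₀ / (2 * Real.sqrt (1 - F₀ * t)) := by
        have h3 : (Real.sqrt (1 - F₀ * t))^3
            = (1 - F₀ * t) * Real.sqrt (1 - F₀ * t) := by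
          rw [pow_succ, hs]
        rw [h3, eq_div_iff (by positivity : (2:ℝ) * Real.sqrt (1 - F₀ * t) ≠ 0)]
        field_simp
        linear_combination (-1 : ℝ) * hs
      rw [heq]
      exact (hderivF t ht).hasDerivWithinAt
  · have hc : Filter.Tendsto (fun t => 1 - F₀ * t) (nhds (1 / F₀)) (nhds 0) := by
      have hcont : Continuous (fun t : ℝ => 1 - F₀ * t) := by continuity
      have := hcont.tendsto (1 / F₀)
      simpa [mul_inv_cancel₀ hK₀.ne'] using this
    exact hc.mono_left nhdsWithin_le_nhds
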